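/- Let (X⁺, T) be a one-sided countable Markov shift and φ a Borel potential. Suppose ν is a probability measure on X⁺ with ν(T⁻¹A) = 0 ⇔ ν(A) = 0 (non-singularity) and L_φ* ν = λν for some λ > 0. Then ν is a Dobrushin–Lanford–Ruelle (DLR) measure for φ: for all n ≥ 1 and ν-a.e. x, E_ν[1_{[x₀,…,x_{n−1}]} | T⁻ⁿℬ](x) = e^{φₙ(x)} / Σ_{y : Tⁿy = Tⁿx} e^{φₙ(y)}, where ℬ is the Borel σ-algebra and φₙ the n-th Birkhoff sum. -/

import Mathlib

set_option linter.unusedSectionVars false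
set_option linter.unusedVariables false


open MeasureTheory ENNReal

variable {S : Type*}

/-- The one-sided topological Markov shift. -/
abbrev MShift (Adj : S → S → Prop) : Type _ :=
  {x : ℕ → S // ∀ i, Adj (x i) (x (i + 1))}

/-- The left shift. -/
def shiftMap (Adj : S → S → Prop) (x : MShift Adj) : MShift Adj :=
  ⟨fun i => x.1 (i + 1), fun i => x.2 (i + 1)⟩

/-- The Ruelle operator on non-negative functions. -/
noncomputable def Ruelle (Adj : S → S → Prop) (φ : MShift Adj → ℝ)
    (f : MShift Adj → ℝ≥0∞) (x : MShift Adj) : ℝ≥0∞ :=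
  ∑' y : {y : MShift Adj // shiftMap Adj y = x}, ENNReal.ofReal (Real.exp (φ y.1)) * f y.1

/-- The `n`-th Birkhoff sum of `φ`. -/
noncomputable def birk (Adj : S → S → Prop) (φ : MShift Adj → ℝ) (n : ℕ)
    (x : MShift Adj) : ℝ :=
  ∑ i ∈ Finset.range n, φ ((shiftMap Adj)^[i] x)

namespace DLRaux

variable {Adj : S → S → Prop}

lemma shift_iterate_apply (n : ℕ) (x : MShift Adj) (i : ℕ) :
    ((shiftMap Adj)^[n] x).1 i = x.1 (i + n) := by
  induction n generalizing x with
  | zero => rfl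
  | succ n ih =>
    rw [Function.iterate_succ_apply, ih]
    rfl

/-- Prepend a symbol to a point of the shift. -/
def cons (a : S) (x : MShift Adj) (h : Adj a (x.1 0)) : MShift Adj :=
  ⟨fun i => Nat.casesOn i a (fun j => x.1 j), by
    intro i
    cases i with
    | zero => exact h
    | succ j => exact x.2 j⟩

lemma shift_cons (a : S) (x : MShift Adj) (h : Adj a (x.1 0)) :
    shiftMap Adj (cons a x h) = x := by
  apply Subtype.ext
  funext i
  rfl

/-- Preimages of `x` under the shift correspond to admissible symbols. -/
noncomputable def preimEquiv (x : MShift Adj) :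
    {y : MShift Adj // shiftMap Adj y = x} ≃ {a : S // Adj a (x.1 0)} where
  toFun y := ⟨y.1.1 0, by
    have h1 : y.1.1 1 = x.1 0 := by
      have := congrArg (fun z : MShift Adj => z.1 0) y.2
      exact this
    have := y.1.2 0
    rwa [h1] at this⟩
  invFun a := ⟨cons a.1 x a.2, shift_cons _ _ _⟩
  left_inv y := by
    apply Subtype.ext
    apply Subtype.ext
    funext i
    cases i with
    | zero => rfl
    | succ j =>
      have := congrArg (fun z : MShift Adj => z.1 j) y.2
      exact (this : y.1.1 (j + 1) = x.1 j).symm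
  right_inv a := by
    apply Subtype.ext
    rfl

/-- The Ruelle operator written as a sum over symbols. -/
lemma Ruelle_eq_tsum_symbols (φ : MShift Adj → ℝ) (f : MShift Adj → ℝ≥0∞)
    (x : MShift Adj) [DecidablePred fun a : S => Adj a (x.1 0)] :
    Ruelle Adj φ f x = ∑' a : S,
      if h : Adj a (x.1 0) then
        ENNReal.ofReal (Real.exp (φ (cons a x h))) * f (cons a x h) else 0 := by
  rw [Ruelle, ← Equiv.tsum_eq (preimEquiv x).symm]
  rw [← tsum_subtype_eq_of_support_subset (s := {a : S | Adj a (x.1 0)})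
    (f := fun a : S => if h : Adj a (x.1 0) then
      ENNReal.ofReal (Real.exp (φ (cons a x h))) * f (cons a x h) else 0)]
  · apply tsum_congr
    intro a
    simp only [preimEquiv, Equiv.coe_fn_symm_mk]
    rw [dif_pos a.2]
  · intro a ha
    by_contra h
    simp only [Set.mem_setOf_eq] at h
    rw [Function.mem_support, dif_neg h] at ha
    exact ha rfl


section Meas

variable [Countable S] [MeasurableSpace S] [MeasurableSingletonClass S]

lemma measurable_coord (i : ℕ) : Measurable fun x : MShift Adj => x.1 i :=
  (measurable_pi_apply i).comp measurable_subtype_coe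

lemma measurable_adjSet (a : S) : MeasurableSet {x : MShift Adj | Adj a (x.1 0)} := by
  have : {x : MShift Adj | Adj a (x.1 0)} = (fun x : MShift Adj => x.1 0) ⁻¹' {b | Adj a b} :=
    rfl
  rw [this]
  exact measurable_coord 0 ((Set.to_countable _).measurableSet)

lemma measurable_cons (a : S) :
    Measurable fun x : {x : MShift Adj // Adj a (x.1 0)} => cons a x.1 x.2 := by
  apply Measurable.subtype_mk
  apply measurable_pi_lambda
  intro i
  cases i with
  | zero => exact measurable_const
  | succ j => exact (measurable_coord j).comp measurable_subtype_coe

lemma measurable_Ruelle (φ : MShift Adj → ℝ) (hφ : Measurable φ)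
    {f : MShift Adj → ℝ≥0∞} (hf : Measurable f) :
    Measurable (Ruelle Adj φ f) := by
  classical
  have : Ruelle Adj φ f = fun x => ∑' a : S,
      if h : Adj a (x.1 0) then
        ENNReal.ofReal (Real.exp (φ (cons a x h))) * f (cons a x h) else 0 := by
    funext x
    exact Ruelle_eq_tsum_symbols φ f x
  rw [this]
  apply Measurable.ennreal_tsum
  intro a
  exact Measurable.dite (s := {x : MShift Adj | Adj a (x.1 0)})
    (f := fun x => ENNReal.ofReal (Real.exp (φ (cons a x.1 x.2))) * f (cons a x.1 x.2))
    ((measurable_ofReal.comp (Real.measurable_exp.comp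
      (hφ.comp (measurable_cons a)))).mul (hf.comp (measurable_cons a)))
    measurable_const (measurable_adjSet a)

end Meas

section Lpow

variable (φ : MShift Adj → ℝ)

/-- The `n`-step transfer operator. -/
noncomputable def Lpow (n : ℕ) (f : MShift Adj → ℝ≥0∞) (x : MShift Adj) : ℝ≥0∞ :=
  ∑' y : {y : MShift Adj // (shiftMap Adj)^[n] y = x},
    ENNReal.ofReal (Real.exp (birk Adj φ n y.1)) * f y.1

lemma Lpow_zero (f : MShift Adj → ℝ≥0∞) (x : MShift Adj) : Lpow φ 0 f x = f x := by
  rw [Lpow]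
  rw [tsum_eq_single (⟨x, rfl⟩ : {y : MShift Adj // (shiftMap Adj)^[0] y = x})]
  · simp [birk]
  · intro y hy
    have hyx : y.1 = x := y.2
    exact absurd (Subtype.ext hyx) hy

/-- Sigma decomposition of `n+1`-step preimages. -/
def preimSigmaEquiv (n : ℕ) (x : MShift Adj) :
    (Σ y : {y : MShift Adj // shiftMap Adj y = x},
        {z : MShift Adj // (shiftMap Adj)^[n] z = y.1}) ≃
      {z : MShift Adj // (shiftMap Adj)^[n + 1] z = x} where
  toFun p := ⟨p.2.1, by rw [Function.iterate_succ_apply', p.2.2]; exact p.1.2⟩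
  invFun z := ⟨⟨(shiftMap Adj)^[n] z.1, by
      have := z.2; rwa [Function.iterate_succ_apply'] at this⟩, ⟨z.1, rfl⟩⟩
  left_inv p := by
    obtain ⟨⟨y, hy⟩, ⟨z, hz⟩⟩ := p
    dsimp only at hz
    subst hz
    rfl
  right_inv z := rfl

lemma birk_succ (n : ℕ) (x : MShift Adj) :
    birk Adj φ (n + 1) x = birk Adj φ n x + φ ((shiftMap Adj)^[n] x) :=
  Finset.sum_range_succ _ _

lemma Lpow_succ (n : ℕ) (f : MShift Adj → ℝ≥0∞) :
    Lpow φ (n + 1) f = Ruelle Adj φ (Lpow φ n f) := by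
  funext x
  rw [Ruelle]
  simp only [Lpow]
  rw [← Equiv.tsum_eq (preimSigmaEquiv n x), ENNReal.tsum_sigma']
  apply tsum_congr
  intro y
  rw [← ENNReal.tsum_mul_left]
  apply tsum_congr
  intro z
  simp only [preimSigmaEquiv, Equiv.coe_fn_mk]
  rw [birk_succ, Real.exp_add, ENNReal.ofReal_mul (Real.exp_nonneg _), z.2]
  ring

lemma measurable_Lpow [Countable S] [MeasurableSpace S] [MeasurableSingletonClass S]
    (hφ : Measurable φ) (n : ℕ) {f : MShift Adj → ℝ≥0∞} (hf : Measurable f) :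
    Measurable (Lpow φ n f) := by
  induction n with
  | zero =>
    have : Lpow φ 0 f = f := funext (Lpow_zero φ f)
    rwa [this]
  | succ n ih =>
    rw [Lpow_succ]
    exact measurable_Ruelle φ hφ ih

end Lpow

section Integral

variable [Countable S] [MeasurableSpace S] [MeasurableSingletonClass S]
variable {φ : MShift Adj → ℝ} {ν : Measure (MShift Adj)} {lam : ℝ}

lemma lintegral_Lpow (hφ : Measurable φ)
    (hconf : ∀ f : MShift Adj → ℝ≥0∞, Measurable f →
      ∫⁻ x, Ruelle Adj φ f x ∂ν = ENNReal.ofReal lam * ∫⁻ x, f x ∂ν)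
    (n : ℕ) {f : MShift Adj → ℝ≥0∞} (hf : Measurable f) :
    ∫⁻ x, Lpow φ n f x ∂ν = (ENNReal.ofReal lam) ^ n * ∫⁻ x, f x ∂ν := by
  induction n with
  | zero => simp only [pow_zero, one_mul]; exact lintegral_congr (Lpow_zero φ f)
  | succ n ih =>
    simp only [Lpow_succ]
    rw [hconf _ (measurable_Lpow φ hφ n hf), ih, pow_succ]
    ring

lemma Lpow_indicator_comp (n : ℕ) (f : MShift Adj → ℝ≥0∞) (C : Set (MShift Adj)) :
    Lpow φ n (((shiftMap Adj)^[n] ⁻¹' C).indicator f) = C.indicator (Lpow φ n f) := by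
  funext x
  by_cases hx : x ∈ C
  · rw [Set.indicator_of_mem hx]
    apply tsum_congr
    intro y
    congr 1
    exact Set.indicator_of_mem (by rw [Set.mem_preimage, y.2]; exact hx) f
  · rw [Set.indicator_of_notMem hx, Lpow, ENNReal.tsum_eq_zero]
    intro y
    rw [Set.indicator_of_notMem (by rw [Set.mem_preimage, y.2]; exact hx), mul_zero]

lemma key_identity (hφ : Measurable φ) (hT : Measurable (shiftMap Adj))
    (hconf : ∀ f : MShift Adj → ℝ≥0∞, Measurable f →
      ∫⁻ x, Ruelle Adj φ f x ∂ν = ENNReal.ofReal lam * ∫⁻ x, f x ∂ν)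
    (n : ℕ) {f : MShift Adj → ℝ≥0∞} (hf : Measurable f)
    {C : Set (MShift Adj)} (hC : MeasurableSet C) :
    ∫⁻ x in C, Lpow φ n f x ∂ν
      = (ENNReal.ofReal lam) ^ n * ∫⁻ x in (shiftMap Adj)^[n] ⁻¹' C, f x ∂ν := by
  have hpre : MeasurableSet ((shiftMap Adj)^[n] ⁻¹' C) := (hT.iterate n) hC
  rw [← lintegral_indicator hC, ← Lpow_indicator_comp n f C,
    lintegral_Lpow hφ hconf n (hf.indicator hpre), lintegral_indicator hpre]

lemma Lpow_comp (n : ℕ) (h : MShift Adj → ℝ≥0∞) (x : MShift Adj) :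
    Lpow φ n (fun y => h ((shiftMap Adj)^[n] y)) x = Lpow φ n 1 x * h x := by
  rw [Lpow, Lpow, ← ENNReal.tsum_mul_right]
  apply tsum_congr
  intro y
  rw [y.2]
  simp only [Pi.one_apply]
  ring

end Integral

section Main

variable [Countable S] [MeasurableSpace S] [MeasurableSingletonClass S]

/-- The DLR property on a single cylinder. -/
lemma word_lemma (Adj : S → S → Prop)
    (φ : MShift Adj → ℝ) (hφ : Measurable φ)
    (hT : Measurable (shiftMap Adj))
    (ν : Measure (MShift Adj)) [IsProbabilityMeasure ν]
    (lam : ℝ) (hlam : 0 < lam)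
    (hconf : ∀ f : MShift Adj → ℝ≥0∞, Measurable f →
      ∫⁻ x, Ruelle Adj φ f x ∂ν = ENNReal.ofReal lam * ∫⁻ x, f x ∂ν)
    (n : ℕ) (a : Fin n → S) :
    ∀ᵐ x ∂ν, x ∈ {y : MShift Adj | ∀ i, (h : i < n) → y.1 i = a ⟨i, h⟩} →
      (ν[Set.indicator {y : MShift Adj | ∀ i, (h : i < n) → y.1 i = a ⟨i, h⟩}
          (fun _ => (1 : ℝ)) |
          MeasurableSpace.comap ((shiftMap Adj)^[n]) inferInstance]) x
        = Real.exp (birk Adj φ n x) /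
            ∑' y : {y : MShift Adj // (shiftMap Adj)^[n] y = (shiftMap Adj)^[n] x},
              Real.exp (birk Adj φ n y.1) := by
  set A : Set (MShift Adj) := {y : MShift Adj | ∀ i, (h : i < n) → y.1 i = a ⟨i, h⟩} with hAdef
  set Tn := (shiftMap Adj)^[n] with hTndef
  have hTn : Measurable Tn := hT.iterate n
  have hA : MeasurableSet A := by
    have : A = ⋂ i : Fin n, (fun y : MShift Adj => y.1 i.1) ⁻¹' {a i} := by
      ext y
      simp only [Set.mem_iInter, Set.mem_preimage, Set.mem_singleton_iff, hAdef,
        Set.mem_setOf_eq]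
      exact ⟨fun h i => h i.1 i.2, fun h i hi => h ⟨i, hi⟩⟩
    rw [this]
    exact MeasurableSet.iInter fun i => measurable_coord i.1 (measurableSet_singleton _)
  set W : MShift Adj → ℝ≥0∞ := Lpow φ n 1 with hWdef
  set Wa : MShift Adj → ℝ≥0∞ := Lpow φ n (A.indicator 1) with hWadef
  have hW : Measurable W := measurable_Lpow φ hφ n measurable_one
  have hWa : Measurable Wa := measurable_Lpow φ hφ n (measurable_one.indicator hA)
  have hlamn_ne0 : (ENNReal.ofReal lam) ^ n ≠ 0 :=
    pow_ne_zero n (ENNReal.ofReal_pos.mpr hlam).ne'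
  have hlamn_netop : (ENNReal.ofReal lam) ^ n ≠ ∞ :=
    pow_ne_top ENNReal.ofReal_ne_top
  -- W is a.e. finite
  have hWfin : ∀ᵐ x ∂ν, W x ≠ ∞ := by
    have hint : ∫⁻ x, W x ∂ν ≠ ∞ := by
      rw [hWdef, lintegral_Lpow hφ hconf n measurable_one]
      simp only [Pi.one_apply, lintegral_one, measure_univ, mul_one]
      exact hlamn_netop
    exact (ae_lt_top hW hint).mono fun x hx => hx.ne
  -- Wa ≤ W
  have hWaW : ∀ x, Wa x ≤ W x := by
    intro x
    apply ENNReal.tsum_le_tsum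
    intro y
    exact mul_le_mul_right (Set.indicator_le_self _ _ _) _
  -- the candidate conditional expectation
  set g : MShift Adj → ℝ := fun x => (Wa (Tn x) / W (Tn x)).toReal with hgdef
  have hratio : Measurable fun z => Wa z / W z := hWa.div hW
  have hg_meas : Measurable g := ((hratio.comp hTn)).ennreal_toReal
  have hratio_le_one : ∀ z, Wa z / W z ≤ 1 := fun z =>
    le_trans (ENNReal.div_le_div_right (hWaW z) _) ENNReal.div_self_le_one
  have hg_le_one : ∀ x, ‖g x‖ ≤ 1 := by
    intro x
    rw [Real.norm_eq_abs, abs_of_nonneg ENNReal.toReal_nonneg]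
    have := ENNReal.toReal_mono one_ne_top (hratio_le_one (Tn x))
    simpa using this
  have hg_int : Integrable g ν :=
    Integrable.mono' (integrable_const 1) hg_meas.aestronglyMeasurable
      (Filter.Eventually.of_forall hg_le_one)
  have hind_int : Integrable (A.indicator fun _ => (1 : ℝ)) ν :=
    (integrable_const 1).indicator hA
  have hm := measurable_iff_comap_le.mp hTn
  haveI : SigmaFinite (ν.trim hm) := inferInstance
  have hgm : AEStronglyMeasurable[MeasurableSpace.comap Tn inferInstance] g ν := by
    apply StronglyMeasurable.aestronglyMeasurable
    apply Measurable.stronglyMeasurable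
    have hTn' : Measurable[MeasurableSpace.comap Tn inferInstance] Tn :=
      measurable_iff_comap_le.mpr le_rfl
    exact (hratio.ennreal_toReal).comp hTn'
  -- the set-integral identity
  have hg_eq : ∀ s : Set (MShift Adj),
      MeasurableSet[MeasurableSpace.comap Tn inferInstance] s → ν s < ∞ →
      ∫ x in s, g x ∂ν = ∫ x in s, (A.indicator fun _ => (1 : ℝ)) x ∂ν := by
    rintro s ⟨C, hC, rfl⟩ _
    have hkey1 : ∫⁻ x in C, Lpow φ n (fun y => Wa (Tn y) / W (Tn y)) x ∂ν
        = (ENNReal.ofReal lam) ^ n * ∫⁻ x in Tn ⁻¹' C, Wa (Tn x) / W (Tn x) ∂ν :=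
      key_identity hφ hT hconf n (hratio.comp hTn) hC
    have hpull : ∀ x, Lpow φ n (fun y => Wa (Tn y) / W (Tn y)) x = W x * (Wa x / W x) := by
      intro x
      rw [hTndef, Lpow_comp n (fun z => Wa z / W z) x, mul_comm]
    have hae : ∀ᵐ x ∂(ν.restrict C), W x * (Wa x / W x) = Wa x := by
      apply ae_restrict_of_ae
      filter_upwards [hWfin] with x hx
      by_cases h0 : W x = 0
      · have : Wa x = 0 := le_antisymm (h0 ▸ hWaW x) bot_le
        simp [h0, this]
      · rw [div_eq_mul_inv, ← mul_assoc, mul_comm (W x) (Wa x), mul_assoc,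
          ENNReal.mul_inv_cancel h0 hx, mul_one]
    have hkey2 : ∫⁻ x in C, Wa x ∂ν
        = (ENNReal.ofReal lam) ^ n * ∫⁻ x in Tn ⁻¹' C, A.indicator 1 x ∂ν := by
      rw [hWadef]
      exact key_identity hφ hT hconf n (measurable_one.indicator hA) hC
    have hmain : ∫⁻ x in Tn ⁻¹' C, Wa (Tn x) / W (Tn x) ∂ν
        = ∫⁻ x in Tn ⁻¹' C, A.indicator 1 x ∂ν := by
      apply (ENNReal.mul_right_inj hlamn_ne0 hlamn_netop).mp
      rw [← hkey1, ← hkey2]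
      calc ∫⁻ x in C, Lpow φ n (fun y => Wa (Tn y) / W (Tn y)) x ∂ν
          = ∫⁻ x in C, W x * (Wa x / W x) ∂ν := lintegral_congr hpull
        _ = ∫⁻ x in C, Wa x ∂ν := lintegral_congr_ae hae
    have hL : ∫ x in Tn ⁻¹' C, g x ∂ν
        = (∫⁻ x in Tn ⁻¹' C, Wa (Tn x) / W (Tn x) ∂ν).toReal := by
      apply integral_toReal ((hratio.comp hTn)).aemeasurable
      exact Filter.Eventually.of_forall fun x =>
        lt_of_le_of_lt (hratio_le_one (Tn x)) ENNReal.one_lt_top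
    have hR : ∫ x in Tn ⁻¹' C, (A.indicator fun _ => (1 : ℝ)) x ∂ν
        = ((ν.restrict (Tn ⁻¹' C)) A).toReal := integral_indicator_one hA
    have hR' : ∫⁻ x in Tn ⁻¹' C, A.indicator 1 x ∂ν = (ν.restrict (Tn ⁻¹' C)) A :=
      lintegral_indicator_one hA
    rw [hL, hR, hmain, hR']
  -- conclude via uniqueness of conditional expectation
  have hCE : g =ᵐ[ν] ν[A.indicator fun _ => (1 : ℝ) | MeasurableSpace.comap Tn inferInstance] :=
    ae_eq_condExp_of_forall_setIntegral_eq hm hind_int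
      (fun s _ _ => hg_int.integrableOn) hg_eq hgm
  filter_upwards [hCE] with x hx hxA
  rw [← hx]
  have hWa_x : Wa (Tn x) = ENNReal.ofReal (Real.exp (birk Adj φ n x)) := by
    rw [hWadef, Lpow,
      tsum_eq_single (⟨x, rfl⟩ : {y : MShift Adj // (shiftMap Adj)^[n] y = Tn x})]
    · rw [Set.indicator_of_mem hxA, Pi.one_apply, mul_one]
    · intro y hy
      have hynA : y.1 ∉ A := by
        intro hmem
        apply hy
        apply Subtype.ext
        apply Subtype.ext
        funext i
        by_cases hi : i < n
        · exact (hmem i hi).trans (hxA i hi).symm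
        · have hi' : i = (i - n) + n := by omega
          rw [hi']
          calc y.1.1 ((i - n) + n) = ((shiftMap Adj)^[n] y.1).1 (i - n) :=
                (shift_iterate_apply n y.1 (i - n)).symm
            _ = (Tn x).1 (i - n) := by rw [y.2]
            _ = x.1 ((i - n) + n) := shift_iterate_apply n x (i - n)
      rw [Set.indicator_of_notMem hynA, mul_zero]
  have hWtsum : (W (Tn x)).toReal
      = ∑' y : {y : MShift Adj // (shiftMap Adj)^[n] y = (shiftMap Adj)^[n] x},
          Real.exp (birk Adj φ n y.1) := by
    rw [hWdef, Lpow]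
    simp only [Pi.one_apply, mul_one]
    rw [ENNReal.tsum_toReal_eq (fun _ => ENNReal.ofReal_ne_top)]
    exact tsum_congr fun y => ENNReal.toReal_ofReal (Real.exp_nonneg _)
  rw [hgdef]
  show (Wa (Tn x) / W (Tn x)).toReal = _
  rw [hWa_x, ENNReal.toReal_div, ENNReal.toReal_ofReal (Real.exp_nonneg _), hWtsum]

end Main

end DLRaux

/-- A non-singular probability eigenmeasure of the Ruelle operator is a
Dobrushin–Lanford–Ruelle measure: for all `n ≥ 1` and a.e. `x`,
`E_ν[1_{[x₀,…,x_{n−1}]} | T⁻ⁿℬ](x) = e^{φₙ(x)} / Σ_{Tⁿy = Tⁿx} e^{φₙ(y)}`. -/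
theorem conformal_is_DLR [Countable S] [MeasurableSpace S] [MeasurableSingletonClass S]
    (Adj : S → S → Prop)
    (hlocF : ∀ a : S, {b : S | Adj a b}.Finite)
    (hlocB : ∀ b : S, {a : S | Adj a b}.Finite)
    (φ : MShift Adj → ℝ) (hφ : Measurable φ)
    (hT : Measurable (shiftMap Adj))
    (ν : Measure (MShift Adj)) [IsProbabilityMeasure ν]
    (hns : ∀ A : Set (MShift Adj), MeasurableSet A →
      (ν A = 0 ↔ ν (shiftMap Adj ⁻¹' A) = 0))
    (lam : ℝ) (hlam : 0 < lam)
    (hconf : ∀ f : MShift Adj → ℝ≥0∞, Measurable f →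
      ∫⁻ x, Ruelle Adj φ f x ∂ν = ENNReal.ofReal lam * ∫⁻ x, f x ∂ν) :
    ∀ n : ℕ, 1 ≤ n → ∀ᵐ x ∂ν,
      (ν[Set.indicator {y : MShift Adj | ∀ i < n, y.1 i = x.1 i} (fun _ => (1 : ℝ)) |
          MeasurableSpace.comap ((shiftMap Adj)^[n]) inferInstance]) x
        = Real.exp (birk Adj φ n x) /
            ∑' y : {y : MShift Adj // (shiftMap Adj)^[n] y = (shiftMap Adj)^[n] x},
              Real.exp (birk Adj φ n y.1) := by
  intro n _
  have h := MeasureTheory.ae_all_iff.mpr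
    (fun a : Fin n → S => DLRaux.word_lemma Adj φ hφ hT ν lam hlam hconf n a)
  filter_upwards [h] with x hx
  exact hx (fun i => x.1 i.1) (fun i h => rfl)
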